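/- Let p>2 and let φ be an analytic self-map of the unit disk. Suppose that almost every point w in some neighborhood of the origin has exactly one preimage under φ (i.e., there exists r>0 such that for almost every w with |w|<r, the set {z ∈ 𝔻 : φ(z)=w} is a singleton). Then the composition operator C_φ is an isometry on the analytic Besov space B_p if and only if φ is a rotation of the disk, i.e., φ(z) = λz for some λ ∈ ℂ with |λ| = 1. -/

import Mathlib

open MeasureTheory

/-- The open unit disk in the complex plane. -/
noncomputable def unitDisk : Set ℂ := Metric.ball (0 : ℂ) 1

/-- Lebesgue area measure on ℂ normalized so that the unit disk has measure 1,
i.e., (1/π) times two-dimensional Lebesgue measure. -/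
noncomputable def dA : Measure ℂ := (ENNReal.ofReal Real.pi)⁻¹ • (volume : Measure ℂ)

/-- φ is an analytic self-map of the unit disk. -/
def IsAnalyticSelfMap (φ : ℂ → ℂ) : Prop :=
  DifferentiableOn ℂ φ unitDisk ∧ Set.MapsTo φ unitDisk unitDisk

/-- The Besov integrand ‖f'(z)‖^p (1-|z|²)^{p-2}. -/
noncomputable def besovIntegrand (p : ℝ) (f : ℂ → ℂ) (z : ℂ) : ℝ :=
  ‖deriv f z‖ ^ p * (1 - ‖z‖ ^ 2) ^ (p - 2)

/-- Membership in the analytic Besov space B_p: f is analytic on 𝔻 and the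
Besov integral is finite (expressed as integrability of the nonnegative integrand). -/
def MemBesov (p : ℝ) (f : ℂ → ℂ) : Prop :=
  DifferentiableOn ℂ f unitDisk ∧ IntegrableOn (besovIntegrand p f) unitDisk dA

/-- The Besov semi-norm ‖f‖_p = (∫_𝔻 |f'|^p (1-|z|²)^{p-2} dA)^{1/p}. -/
noncomputable def besovSemi (p : ℝ) (f : ℂ → ℂ) : ℝ :=
  (∫ z in unitDisk, besovIntegrand p f z ∂dA) ^ (1 / p)

/-- The Besov norm ‖f‖_{B_p} = |f(0)| + ‖f‖_p. -/
noncomputable def besovNorm (p : ℝ) (f : ℂ → ℂ) : ℝ := ‖f 0‖ + besovSemi p f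

/-- The composition operator C_φ is an isometry on B_p. -/
def IsBesovIsometry (p : ℝ) (φ : ℂ → ℂ) : Prop :=
  ∀ f : ℂ → ℂ, MemBesov p f → MemBesov p (f ∘ φ) ∧ besovNorm p (f ∘ φ) = besovNorm p f

/-- φ is a rotation of the disk: φ(z) = λ z for a unimodular constant λ. -/
def IsRotation (φ : ℂ → ℂ) : Prop :=
  ∃ lam : ℂ, ‖lam‖ = 1 ∧ ∀ z ∈ unitDisk, φ z = lam * z

/-! ### Auxiliary material -/

open Metric Set Complex Filter

/-! #### Blaschke factors and the Schwarz–Pick inequality -/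

noncomputable def blas (v u : ℂ) : ℂ := (u - v) / (1 - (starRingEnd ℂ) v * u)

lemma normSq_lt_one_of_norm {u : ℂ} (hu : ‖u‖ < 1) : normSq u < 1 := by
  rw [← Complex.sq_norm]
  nlinarith [norm_nonneg u]

lemma blas_denom_ne {v u : ℂ} (hv : ‖v‖ < 1) (hu : ‖u‖ < 1) :
    1 - (starRingEnd ℂ) v * u ≠ 0 := by
  intro h
  have h1 : (starRingEnd ℂ) v * u = 1 := by linear_combination -h
  have h2 := congrArg norm h1
  rw [norm_mul, norm_one, RCLike.norm_conj] at h2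
  nlinarith [norm_nonneg u, norm_nonneg v]

lemma norm_blas_lt_one {v u : ℂ} (hv : ‖v‖ < 1) (hu : ‖u‖ < 1) : ‖blas v u‖ < 1 := by
  have hd := blas_denom_ne hv hu
  rw [blas, norm_div, div_lt_one (by simpa using norm_pos_iff.mpr hd)]
  have hsq : normSq (u - v) < normSq (1 - (starRingEnd ℂ) v * u) := by
    have e1 : normSq (u - v) = normSq u + normSq v - 2 * (u * (starRingEnd ℂ) v).re :=
      normSq_sub u v
    have e2 : normSq (1 - (starRingEnd ℂ) v * u)
        = 1 + normSq v * normSq u - 2 * (u * (starRingEnd ℂ) v).re := by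
      rw [normSq_sub]
      have h3 : ((1 : ℂ) * (starRingEnd ℂ) ((starRingEnd ℂ) v * u)).re
          = (u * (starRingEnd ℂ) v).re := by
        simp [Complex.mul_re]; ring
      rw [h3]
      simp [normSq_mul]
    have h1 := normSq_lt_one_of_norm hu
    have h2 := normSq_lt_one_of_norm hv
    nlinarith
  have h4 := Real.sqrt_lt_sqrt (normSq_nonneg _) hsq
  rwa [← Complex.norm_def, ← Complex.norm_def] at h4

lemma blas_hasDerivAt {v u : ℂ} (hv : ‖v‖ < 1) (hu : ‖u‖ < 1) :
    HasDerivAt (blas v) ((1 - normSq v) / (1 - (starRingEnd ℂ) v * u) ^ 2) u := by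
  have hd := blas_denom_ne hv hu
  have h1 : HasDerivAt (fun u => u - v) 1 u := (hasDerivAt_id u).sub_const v
  have h2 : HasDerivAt (fun u => 1 - (starRingEnd ℂ) v * u) (-(starRingEnd ℂ) v) u := by
    simpa using ((hasDerivAt_id u).const_mul ((starRingEnd ℂ) v)).const_sub 1
  have h3 := h1.div h2 hd
  refine h3.congr_deriv ?_
  congr 1
  have h5 : (starRingEnd ℂ) v * v = (normSq v : ℂ) := by
    rw [mul_comm]; exact Complex.mul_conj v
  linear_combination -h5

lemma schwarzPick {φ : ℂ → ℂ} (hd : DifferentiableOn ℂ φ (ball 0 1))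
    (hm : MapsTo φ (ball 0 1) (ball 0 1)) {z : ℂ} (hz : z ∈ ball (0:ℂ) 1) :
    ‖deriv φ z‖ * (1 - ‖z‖ ^ 2) ≤ 1 - ‖φ z‖ ^ 2 := by
  have ha : ‖z‖ < 1 := mem_ball_zero_iff.mp hz
  have hb : ‖φ z‖ < 1 := mem_ball_zero_iff.mp (hm hz)
  have hna : ‖-z‖ < 1 := by simpa using ha
  set F : ℂ → ℂ := fun w => blas (φ z) (φ (blas (-z) w)) with hF
  have hsub : ∀ w : ℂ, ‖w‖ < 1 → ‖blas (-z) w‖ < 1 := fun w hw => norm_blas_lt_one hna hw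
  have hphi : ∀ w : ℂ, ‖w‖ < 1 → ‖φ (blas (-z) w)‖ < 1 := fun w hw =>
    mem_ball_zero_iff.mp (hm (mem_ball_zero_iff.mpr (hsub w hw)))
  have hblas0 : blas (-z) 0 = z := by simp [blas]
  have hF0 : F 0 = 0 := by rw [hF]; simp only [hblas0]; simp [blas]
  have hFd : DifferentiableOn ℂ F (ball 0 1) := by
    intro w hw
    have hw' : ‖w‖ < 1 := mem_ball_zero_iff.mp hw
    have d1 := blas_hasDerivAt hna hw'
    have dφ : HasDerivAt φ (deriv φ (blas (-z) w)) (blas (-z) w) :=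
      (hd.differentiableAt (isOpen_ball.mem_nhds (mem_ball_zero_iff.mpr (hsub w hw')))).hasDerivAt
    have d2 := blas_hasDerivAt hb (hphi w hw')
    exact ((d2.comp w (dφ.comp w d1)).differentiableAt).differentiableWithinAt
  have hFm : MapsTo F (ball 0 1) (ball (F 0) 1) := by
    rw [hF0]
    intro w hw
    exact mem_ball_zero_iff.mpr (norm_blas_lt_one hb (hphi w (mem_ball_zero_iff.mp hw)))
  have hSch := Complex.norm_deriv_le_div_of_mapsTo_ball hFd (hFm.mono_right ball_subset_closedBall) one_pos
  have d1 := blas_hasDerivAt hna (show ‖(0:ℂ)‖ < 1 by simp)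
  have dφ : HasDerivAt φ (deriv φ z) z :=
    (hd.differentiableAt (isOpen_ball.mem_nhds hz)).hasDerivAt
  have dφ' : HasDerivAt φ (deriv φ z) (blas (-z) 0) := by rwa [hblas0]
  have d2 := blas_hasDerivAt hb hb
  have dF : HasDerivAt F
      ((1 - normSq (φ z)) / (1 - (starRingEnd ℂ) (φ z) * (φ z)) ^ 2 *
        (deriv φ z * ((1 - normSq (-z)) / (1 - (starRingEnd ℂ) (-z) * 0) ^ 2))) 0 := by
    have d2' : HasDerivAt (blas (φ z))
        ((1 - (normSq (φ z) : ℂ)) / (1 - (starRingEnd ℂ) (φ z) * (φ z)) ^ 2)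
        ((φ ∘ blas (-z)) 0) := by simpa [Function.comp, hblas0] using d2
    have := (d2'.comp 0 (dφ'.comp 0 d1))
    have h' : HasDerivAt F _ 0 := this
    simpa [hblas0] using h'
  have hderiv : deriv F 0 = (1 - normSq (φ z)) / (1 - (starRingEnd ℂ) (φ z) * (φ z)) ^ 2 *
        (deriv φ z * ((1 - normSq (-z)) / (1 - (starRingEnd ℂ) (-z) * 0) ^ 2)) := dF.deriv
  rw [hderiv] at hSch
  have hcb : (starRingEnd ℂ) (φ z) * (φ z) = ((normSq (φ z) : ℝ) : ℂ) := by
    rw [mul_comm]; exact Complex.mul_conj (φ z)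
  have hb1 : (0:ℝ) < 1 - normSq (φ z) := by linarith [normSq_lt_one_of_norm hb]
  have ha1 : (0:ℝ) < 1 - normSq z := by linarith [normSq_lt_one_of_norm ha]
  have hnorm : ‖(1 - normSq (φ z) : ℂ) / (1 - (starRingEnd ℂ) (φ z) * (φ z)) ^ 2 *
        (deriv φ z * ((1 - normSq (-z) : ℂ) / (1 - (starRingEnd ℂ) (-z) * 0) ^ 2))‖
      = ‖deriv φ z‖ * (1 - normSq z) / (1 - normSq (φ z)) := by
    rw [hcb]
    simp only [normSq_neg, mul_zero, sub_zero, one_pow, div_one]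
    have e1 : ((1 : ℂ) - (normSq (φ z) : ℂ)) = ((1 - normSq (φ z) : ℝ) : ℂ) := by push_cast; ring
    have e2 : ((1 : ℂ) - (normSq z : ℂ)) = ((1 - normSq z : ℝ) : ℂ) := by push_cast; ring
    simp only [e1, e2, norm_mul, norm_div, norm_pow, Complex.norm_real, Real.norm_eq_abs]
    rw [abs_of_pos hb1, abs_of_pos ha1]
    field_simp
  rw [hnorm, div_one] at hSch
  have h6 := (div_le_one hb1).mp hSch
  have hsq1 : normSq z = ‖z‖ ^ 2 := by rw [← Complex.sq_norm]
  have hsq2 : normSq (φ z) = ‖φ z‖ ^ 2 := by rw [← Complex.sq_norm]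
  rw [hsq1, hsq2] at h6
  exact h6

/-! #### Basic facts about the disk, the measure and the integrand -/

lemma mem_unitDisk {z : ℂ} : z ∈ unitDisk ↔ ‖z‖ < 1 := mem_ball_zero_iff

lemma isOpen_unitDisk : IsOpen unitDisk := isOpen_ball

lemma measurableSet_unitDisk : MeasurableSet unitDisk := measurableSet_ball

lemma zero_mem_unitDisk : (0:ℂ) ∈ unitDisk := by
  rw [mem_unitDisk]; simp

lemma piFac_ne_zero : (ENNReal.ofReal Real.pi)⁻¹ ≠ 0 :=
  ENNReal.inv_ne_zero.mpr ENNReal.ofReal_ne_top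

lemma piFac_ne_top : (ENNReal.ofReal Real.pi)⁻¹ ≠ ⊤ :=
  ENNReal.inv_ne_top.mpr (ENNReal.ofReal_pos.mpr Real.pi_pos).ne'

lemma integrableOn_dA_iff {f : ℂ → ℝ} {s : Set ℂ} :
    IntegrableOn f s dA ↔ IntegrableOn f s volume := by
  unfold IntegrableOn dA
  rw [Measure.restrict_smul]
  exact integrable_smul_measure piFac_ne_zero piFac_ne_top

lemma setIntegral_dA (f : ℂ → ℝ) (s : Set ℂ) :
    ∫ z in s, f z ∂dA
      = ((ENNReal.ofReal Real.pi)⁻¹).toReal • ∫ z in s, f z ∂(volume : Measure ℂ) := by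
  unfold dA
  rw [Measure.restrict_smul, integral_smul_measure]

lemma kappa_pos : 0 < ((ENNReal.ofReal Real.pi)⁻¹).toReal :=
  ENNReal.toReal_pos piFac_ne_zero piFac_ne_top

lemma weight_base_pos {z : ℂ} (hz : z ∈ unitDisk) : 0 < 1 - ‖z‖ ^ 2 := by
  have := mem_unitDisk.mp hz
  nlinarith [norm_nonneg z]

lemma weight_pos {p : ℝ} {z : ℂ} (hz : z ∈ unitDisk) : 0 < (1 - ‖z‖ ^ 2) ^ (p - 2) :=
  Real.rpow_pos_of_pos (weight_base_pos hz) _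

lemma weight_le_one {p : ℝ} (hp : 2 < p) {z : ℂ} (hz : z ∈ unitDisk) :
    (1 - ‖z‖ ^ 2) ^ (p - 2) ≤ 1 := by
  apply Real.rpow_le_one (weight_base_pos hz).le
  · nlinarith [norm_nonneg z]
  · linarith

lemma besovIntegrand_nonneg {p : ℝ} {f : ℂ → ℂ} {z : ℂ} (hz : z ∈ unitDisk) :
    0 ≤ besovIntegrand p f z :=
  mul_nonneg (Real.rpow_nonneg (norm_nonneg _) _) (weight_pos hz).le

lemma contOn_besovIntegrand {p : ℝ} (hp : 0 ≤ p) {f : ℂ → ℂ}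
    (hf : DifferentiableOn ℂ f unitDisk) :
    ContinuousOn (besovIntegrand p f) unitDisk := by
  have hderiv : ContinuousOn (deriv f) unitDisk :=
    ((hf.analyticOnNhd isOpen_unitDisk).deriv).continuousOn
  have h1 : ContinuousOn (fun z => ‖deriv f z‖ ^ p) unitDisk :=
    (hderiv.norm).rpow_const (fun z _ => Or.inr hp)
  have h2 : ContinuousOn (fun z : ℂ => (1 - ‖z‖ ^ 2) ^ (p - 2)) unitDisk :=
    ((continuous_const.sub ((continuous_norm).pow 2)).continuousOn).rpow_const
      (fun z hz => Or.inl (weight_base_pos hz).ne')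
  exact h1.mul h2

lemma volume_unitDisk_lt_top : (volume : Measure ℂ) unitDisk < ⊤ := by
  unfold unitDisk; exact measure_ball_lt_top

lemma integrableOn_unitDisk_of_bound {F : ℂ → ℝ} (hF : ContinuousOn F unitDisk) (C : ℝ)
    (hC : ∀ z ∈ unitDisk, ‖F z‖ ≤ C) : IntegrableOn F unitDisk dA := by
  rw [integrableOn_dA_iff]
  have hconst : IntegrableOn (fun _ : ℂ => C) unitDisk volume :=
    integrableOn_const volume_unitDisk_lt_top.ne
  refine hconst.mono' (hF.aestronglyMeasurable measurableSet_unitDisk) ?_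
  exact (ae_restrict_iff' measurableSet_unitDisk).mpr (ae_of_all _ hC)

lemma memBesov_of_deriv_bound {p : ℝ} (hp : 2 < p) {f : ℂ → ℂ}
    (hf : DifferentiableOn ℂ f unitDisk)
    (hC : ∀ z ∈ unitDisk, ‖deriv f z‖ ≤ 1) : MemBesov p f := by
  refine ⟨hf, integrableOn_unitDisk_of_bound (contOn_besovIntegrand (by linarith) hf) 1 ?_⟩
  intro z hz
  rw [Real.norm_eq_abs, _root_.abs_of_nonneg (besovIntegrand_nonneg hz)]
  unfold besovIntegrand
  calc ‖deriv f z‖ ^ p * (1 - ‖z‖ ^ 2) ^ (p - 2)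
      ≤ 1 * 1 := by
        apply mul_le_mul _ (weight_le_one hp hz) (weight_pos hz).le zero_le_one
        calc ‖deriv f z‖ ^ p ≤ 1 ^ p :=
              Real.rpow_le_rpow (norm_nonneg _) (hC z hz) (by linarith)
          _ = 1 := Real.one_rpow p
    _ = 1 := one_mul 1

lemma deriv_monomial (n : ℕ) (w : ℂ) :
    deriv (fun z : ℂ => ((n : ℂ) + 1)⁻¹ * z ^ (n + 1)) w = w ^ n := by
  have h1 : deriv (fun z : ℂ => ((n : ℂ) + 1)⁻¹ * z ^ (n + 1)) w
      = ((n : ℂ) + 1)⁻¹ * deriv (fun z : ℂ => z ^ (n + 1)) w :=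
    deriv_const_mul _ (differentiableAt_pow (n+1))
  rw [h1, deriv_pow_field]
  have hne : (n : ℂ) + 1 ≠ 0 := Nat.cast_add_one_ne_zero n
  field_simp
  simp

lemma memBesov_monomial {p : ℝ} (hp : 2 < p) (n : ℕ) :
    MemBesov p (fun z : ℂ => ((n : ℂ) + 1)⁻¹ * z ^ (n + 1)) := by
  apply memBesov_of_deriv_bound hp
    ((differentiable_const _).mul (differentiable_pow (n+1))).differentiableOn
  intro z hz
  show ‖deriv (fun z : ℂ => ((n : ℂ) + 1)⁻¹ * z ^ (n + 1)) z‖ ≤ 1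
  rw [deriv_monomial, norm_pow]
  exact pow_le_one₀ (norm_nonneg z) (mem_unitDisk.mp hz).le

lemma memBesov_id {p : ℝ} (hp : 2 < p) : MemBesov p (fun z : ℂ => z) := by
  apply memBesov_of_deriv_bound hp differentiable_id.differentiableOn
  intro z _
  simp

lemma besovIntegrand_id {p : ℝ} (z : ℂ) :
    besovIntegrand p (fun w : ℂ => w) z = (1 - ‖z‖ ^ 2) ^ (p - 2) := by
  unfold besovIntegrand
  simp [deriv_id'', Real.one_rpow]

lemma besovIntegrand_sub_const (p : ℝ) (f : ℂ → ℂ) (c : ℂ) :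
    besovIntegrand p (fun z => f z - c) = besovIntegrand p f := by
  funext z
  unfold besovIntegrand
  rw [deriv_sub_const]

lemma memBesov_sub_const {p : ℝ} {f : ℂ → ℂ} (hf : MemBesov p f) (c : ℂ) :
    MemBesov p (fun z => f z - c) :=
  ⟨hf.1.sub_const c, by rw [besovIntegrand_sub_const]; exact hf.2⟩

lemma besovSemi_sub_const (p : ℝ) (f : ℂ → ℂ) (c : ℂ) :
    besovSemi p (fun z => f z - c) = besovSemi p f := by
  unfold besovSemi
  rw [besovIntegrand_sub_const]

/-! #### φ(0) = 0 and the fundamental integral identity -/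

lemma phi_zero {p : ℝ} (hp : 2 < p) {φ : ℂ → ℂ} (h : IsBesovIsometry p φ) : φ 0 = 0 := by
  obtain ⟨_, e1⟩ := h (fun z => z) (memBesov_id hp)
  obtain ⟨_, e2⟩ := h (fun z => z - φ 0) (memBesov_sub_const (memBesov_id hp) _)
  have hc1 : ((fun z : ℂ => z) ∘ φ) = φ := rfl
  have hc2 : ((fun z : ℂ => z - φ 0) ∘ φ) = fun z => φ z - φ 0 := rfl
  rw [hc1] at e1
  rw [hc2] at e2
  unfold besovNorm at e1 e2
  rw [besovSemi_sub_const p (fun z : ℂ => z) (φ 0)] at e2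
  rw [show besovSemi p (fun z => φ z - φ 0) = besovSemi p φ from
    besovSemi_sub_const p φ (φ 0)] at e2
  simp only [sub_self, norm_zero, zero_add, zero_sub, norm_neg, norm_zero] at e2 e1
  have h7 : ‖φ 0‖ = 0 := by linarith
  simpa using h7

lemma semi_integral_eq {p : ℝ} (hp : 2 < p) {φ f : ℂ → ℂ} (h : IsBesovIsometry p φ)
    (hφ0 : φ 0 = 0) (hf : MemBesov p f) (hf0 : f 0 = 0) :
    ∫ z in unitDisk, besovIntegrand p (f ∘ φ) z ∂dA
      = ∫ z in unitDisk, besovIntegrand p f z ∂dA := by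
  obtain ⟨hmem, heq⟩ := h f hf
  have h0 : (f ∘ φ) 0 = 0 := by simp [Function.comp, hφ0, hf0]
  unfold besovNorm at heq
  rw [h0, hf0, norm_zero] at heq
  have heq' : besovSemi p (f ∘ φ) = besovSemi p f := by linarith
  unfold besovSemi at heq'
  have hA : 0 ≤ ∫ z in unitDisk, besovIntegrand p (f ∘ φ) z ∂dA :=
    setIntegral_nonneg measurableSet_unitDisk (fun z hz => besovIntegrand_nonneg hz)
  have hB : 0 ≤ ∫ z in unitDisk, besovIntegrand p f z ∂dA :=
    setIntegral_nonneg measurableSet_unitDisk (fun z hz => besovIntegrand_nonneg hz)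
  have hpne : p ≠ 0 := by linarith
  have := congrArg (fun x : ℝ => x ^ p) heq'
  simpa only [one_div, Real.rpow_inv_rpow hA hpne, Real.rpow_inv_rpow hB hpne] using this

lemma besovIntegrand_comp {p : ℝ} {φ f : ℂ → ℂ} (hφd : DifferentiableOn ℂ φ unitDisk)
    (hfd : Differentiable ℂ f) {z : ℂ} (hz : z ∈ unitDisk) :
    besovIntegrand p (f ∘ φ) z
      = ‖deriv f (φ z)‖ ^ p * ‖deriv φ z‖ ^ p * (1 - ‖z‖ ^ 2) ^ (p - 2) := by
  unfold besovIntegrand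
  rw [deriv_comp (x := z) (hfd _) (hφd.differentiableAt (isOpen_unitDisk.mem_nhds hz)), norm_mul,
    Real.mul_rpow (norm_nonneg _) (norm_nonneg _)]

lemma pow_rpow_swap {x : ℝ} (hx : 0 ≤ x) (n : ℕ) (p : ℝ) : (x ^ n) ^ p = (x ^ p) ^ n := by
  rw [← Real.rpow_natCast x n, ← Real.rpow_mul hx, mul_comm, Real.rpow_mul hx,
    Real.rpow_natCast]

lemma moment_identity {p : ℝ} (hp : 2 < p) {φ : ℂ → ℂ} (hφ : IsAnalyticSelfMap φ)
    (h : IsBesovIsometry p φ) (hφ0 : φ 0 = 0) (n : ℕ) :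
    ∫ z in unitDisk, (‖φ z‖ ^ p) ^ n * besovIntegrand p φ z ∂dA
      = ∫ z in unitDisk, (‖z‖ ^ p) ^ n * besovIntegrand p (fun w : ℂ => w) z ∂dA := by
  have hkey := semi_integral_eq hp h hφ0 (memBesov_monomial hp n) (by simp)
  have hfd : Differentiable ℂ (fun z : ℂ => ((n : ℂ) + 1)⁻¹ * z ^ (n + 1)) :=
    (differentiable_const _).mul (differentiable_pow (n+1))
  have hL : EqOn (besovIntegrand p ((fun z : ℂ => ((n : ℂ) + 1)⁻¹ * z ^ (n + 1)) ∘ φ))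
      (fun z => (‖φ z‖ ^ p) ^ n * besovIntegrand p φ z) unitDisk := by
    intro z hz
    rw [besovIntegrand_comp hφ.1 hfd hz, deriv_monomial, norm_pow,
      pow_rpow_swap (norm_nonneg _) n p]
    unfold besovIntegrand
    ring
  have hR : EqOn (besovIntegrand p (fun z : ℂ => ((n : ℂ) + 1)⁻¹ * z ^ (n + 1)))
      (fun z => (‖z‖ ^ p) ^ n * besovIntegrand p (fun w : ℂ => w) z) unitDisk := by
    intro z hz
    unfold besovIntegrand
    simp only [deriv_monomial, deriv_id'', norm_pow, norm_one, Real.one_rpow]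
    rw [pow_rpow_swap (norm_nonneg _) n p]
    ring
  rw [← setIntegral_congr_fun measurableSet_unitDisk hL,
    ← setIntegral_congr_fun measurableSet_unitDisk hR]
  exact hkey

/-! #### From moments to continuous test functions (Weierstrass) -/

section Weier

variable {u W : ℂ → ℝ}

lemma integrableOn_comp_mul (hu : ContinuousOn u unitDisk)
    (hu01 : ∀ z ∈ unitDisk, u z ∈ Icc (0:ℝ) 1)
    (hWc : ContinuousOn W unitDisk) (hW0 : ∀ z ∈ unitDisk, 0 ≤ W z)
    (hWi : IntegrableOn W unitDisk dA) {g : ℝ → ℝ} (hg : Continuous g) :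
    IntegrableOn (fun z => g (u z) * W z) unitDisk dA := by
  obtain ⟨C, hC⟩ := (isCompact_Icc (a := (0:ℝ)) (b := 1)).exists_bound_of_continuousOn
    hg.continuousOn
  refine Integrable.mono' (hWi.const_mul C)
    (((hg.comp_continuousOn hu).mul hWc).aestronglyMeasurable measurableSet_unitDisk) ?_
  refine (ae_restrict_iff' measurableSet_unitDisk).mpr (ae_of_all _ fun z hz => ?_)
  rw [Real.norm_eq_abs, abs_mul, _root_.abs_of_nonneg (hW0 z hz)]
  exact mul_le_mul_of_nonneg_right (hC (u z) (hu01 z hz)) (hW0 z hz)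

lemma integral_diff_le (hu : ContinuousOn u unitDisk)
    (hu01 : ∀ z ∈ unitDisk, u z ∈ Icc (0:ℝ) 1)
    (hWc : ContinuousOn W unitDisk) (hW0 : ∀ z ∈ unitDisk, 0 ≤ W z)
    (hWi : IntegrableOn W unitDisk dA) {g h : ℝ → ℝ} (hg : Continuous g) (hh : Continuous h)
    {ε : ℝ} (hε : ∀ x ∈ Icc (0:ℝ) 1, |g x - h x| ≤ ε) :
    |∫ z in unitDisk, g (u z) * W z ∂dA - ∫ z in unitDisk, h (u z) * W z ∂dA|
      ≤ ε * ∫ z in unitDisk, W z ∂dA := by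
  have hgi := integrableOn_comp_mul hu hu01 hWc hW0 hWi hg
  have hhi := integrableOn_comp_mul hu hu01 hWc hW0 hWi hh
  rw [← integral_sub hgi hhi]
  have hb : ∀ z ∈ unitDisk, |g (u z) * W z - h (u z) * W z| ≤ ε * W z := by
    intro z hz
    rw [← sub_mul, abs_mul, _root_.abs_of_nonneg (hW0 z hz)]
    exact mul_le_mul_of_nonneg_right (hε _ (hu01 z hz)) (hW0 z hz)
  calc |∫ z in unitDisk, (g (u z) * W z - h (u z) * W z) ∂dA|
      ≤ ∫ z in unitDisk, |g (u z) * W z - h (u z) * W z| ∂dA := by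
        have := norm_integral_le_integral_norm
          (μ := dA.restrict unitDisk) (fun z => g (u z) * W z - h (u z) * W z)
        simpa [Real.norm_eq_abs] using this
    _ ≤ ∫ z in unitDisk, ε * W z ∂dA := by
        apply setIntegral_mono_on (hgi.sub hhi).abs (hWi.const_mul ε)
          measurableSet_unitDisk
        exact hb
    _ = ε * ∫ z in unitDisk, W z ∂dA := integral_const_mul ε _

end Weier

lemma g_identity {p : ℝ} (hp : 2 < p) {φ : ℂ → ℂ} (hφ : IsAnalyticSelfMap φ)
    (h : IsBesovIsometry p φ) (hφ0 : φ 0 = 0) {g : ℝ → ℝ} (hg : Continuous g) :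
    ∫ z in unitDisk, g (‖φ z‖ ^ p) * besovIntegrand p φ z ∂dA
      = ∫ z in unitDisk, g (‖z‖ ^ p) * besovIntegrand p (fun w : ℂ => w) z ∂dA := by
  have hp0 : (0:ℝ) ≤ p := by linarith
  -- the two weighted systems
  have huφ : ContinuousOn (fun z => ‖φ z‖ ^ p) unitDisk :=
    (hφ.1.continuousOn.norm).rpow_const (fun z _ => Or.inr hp0)
  have huφ01 : ∀ z ∈ unitDisk, ‖φ z‖ ^ p ∈ Icc (0:ℝ) 1 := fun z hz =>
    ⟨Real.rpow_nonneg (norm_nonneg _) _,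
      Real.rpow_le_one (norm_nonneg _) (mem_unitDisk.mp (hφ.2 hz)).le hp0⟩
  have huid : ContinuousOn (fun z : ℂ => ‖z‖ ^ p) unitDisk :=
    (continuous_norm.continuousOn).rpow_const (fun z _ => Or.inr hp0)
  have huid01 : ∀ z ∈ unitDisk, ‖z‖ ^ p ∈ Icc (0:ℝ) 1 := fun z hz =>
    ⟨Real.rpow_nonneg (norm_nonneg _) _,
      Real.rpow_le_one (norm_nonneg _) (mem_unitDisk.mp hz).le hp0⟩
  have hWc : ContinuousOn (besovIntegrand p φ) unitDisk := contOn_besovIntegrand hp0 hφ.1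
  have hVc : ContinuousOn (besovIntegrand p (fun w : ℂ => w)) unitDisk :=
    contOn_besovIntegrand hp0 differentiable_id.differentiableOn
  have hW0 : ∀ z ∈ unitDisk, 0 ≤ besovIntegrand p φ z := fun z hz => besovIntegrand_nonneg hz
  have hV0 : ∀ z ∈ unitDisk, 0 ≤ besovIntegrand p (fun w : ℂ => w) z := fun z hz =>
    besovIntegrand_nonneg hz
  have hWi : IntegrableOn (besovIntegrand p φ) unitDisk dA := by
    have := (h (fun z => z) (memBesov_id hp)).1.2
    rwa [show ((fun z : ℂ => z) ∘ φ) = φ from rfl] at this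
  have hVi : IntegrableOn (besovIntegrand p (fun w : ℂ => w)) unitDisk dA :=
    (memBesov_id hp).2
  -- polynomial identity
  have hpoly : ∀ P : Polynomial ℝ,
      ∫ z in unitDisk, P.eval (‖φ z‖ ^ p) * besovIntegrand p φ z ∂dA
        = ∫ z in unitDisk, P.eval (‖z‖ ^ p) * besovIntegrand p (fun w : ℂ => w) z ∂dA := by
    intro P
    have hexp : ∀ (v : ℂ → ℝ) (Y : ℂ → ℝ), (fun z => P.eval (v z) * Y z)
        = fun z => ∑ i ∈ Finset.range (P.natDegree + 1), P.coeff i * (v z ^ i * Y z) := by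
      intro v Y
      funext z
      rw [Polynomial.eval_eq_sum_range, Finset.sum_mul]
      congr 1
      funext i
      ring
    rw [hexp, hexp]
    have hterm : ∀ (v : ℂ → ℝ) (Y : ℂ → ℝ), ContinuousOn v unitDisk →
        (∀ z ∈ unitDisk, v z ∈ Icc (0:ℝ) 1) → ContinuousOn Y unitDisk →
        (∀ z ∈ unitDisk, 0 ≤ Y z) → IntegrableOn Y unitDisk dA →
        ∀ i : ℕ, IntegrableOn (fun z => P.coeff i * (v z ^ i * Y z)) unitDisk dA := by
      intro v Y hv hv01 hY hY0 hYi i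
      exact (integrableOn_comp_mul hv hv01 hY hY0 hYi (continuous_pow i)).const_mul _
    rw [integral_finset_sum _ (fun i _ => hterm _ _ huφ huφ01 hWc hW0 hWi i),
      integral_finset_sum _ (fun i _ => hterm _ _ huid huid01 hVc hV0 hVi i)]
    apply Finset.sum_congr rfl
    intro i _
    rw [integral_const_mul, integral_const_mul]
    congr 1
    exact moment_identity hp hφ h hφ0 i
  -- Weierstrass approximation
  have hMW : 0 ≤ ∫ z in unitDisk, besovIntegrand p φ z ∂dA :=
    setIntegral_nonneg measurableSet_unitDisk hW0
  have hMV : 0 ≤ ∫ z in unitDisk, besovIntegrand p (fun w : ℂ => w) z ∂dA :=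
    setIntegral_nonneg measurableSet_unitDisk hV0
  set M := (∫ z in unitDisk, besovIntegrand p φ z ∂dA)
    + ∫ z in unitDisk, besovIntegrand p (fun w : ℂ => w) z ∂dA with hM
  have habs : ∀ ε : ℝ, 0 < ε →
      |(∫ z in unitDisk, g (‖φ z‖ ^ p) * besovIntegrand p φ z ∂dA)
        - ∫ z in unitDisk, g (‖z‖ ^ p) * besovIntegrand p (fun w : ℂ => w) z ∂dA| ≤ ε := by
    intro ε hε
    have hε' : 0 < ε / (2 * (M + 1)) := by positivity
    obtain ⟨P, hP⟩ := exists_polynomial_near_of_continuousOn 0 1 g hg.continuousOn _ hε'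
    have hP' : ∀ x ∈ Icc (0:ℝ) 1, |g x - Polynomial.eval x P| ≤ ε / (2 * (M + 1)) := by
      intro x hx
      rw [abs_sub_comm]
      exact (hP x hx).le
    have hPc : Continuous fun x => Polynomial.eval x P := P.continuous
    have h1 := integral_diff_le huφ huφ01 hWc hW0 hWi hg hPc hP'
    have h2 := integral_diff_le huid huid01 hVc hV0 hVi hg hPc hP'
    have h3 := hpoly P
    have hMle : (∫ z in unitDisk, besovIntegrand p φ z ∂dA) ≤ M := by
      rw [hM]; linarith
    have hMle' : (∫ z in unitDisk, besovIntegrand p (fun w : ℂ => w) z ∂dA) ≤ M := by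
      rw [hM]; linarith
    have hfrac : ε / (2 * (M + 1)) * M ≤ ε / 2 := by
      rw [div_mul_eq_mul_div, div_le_div_iff₀ (by positivity) (by positivity)]
      nlinarith
    have e4 := abs_sub_le (∫ z in unitDisk, g (‖φ z‖ ^ p) * besovIntegrand p φ z ∂dA)
      (∫ z in unitDisk, Polynomial.eval (‖φ z‖ ^ p) P * besovIntegrand p φ z ∂dA)
      (∫ z in unitDisk, g (‖z‖ ^ p) * besovIntegrand p (fun w : ℂ => w) z ∂dA)
    nth_rewrite 2 [h3] at e4
    have h2' : |(∫ z in unitDisk, Polynomial.eval (‖z‖ ^ p) P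
          * besovIntegrand p (fun w : ℂ => w) z ∂dA)
        - ∫ z in unitDisk, g (‖z‖ ^ p) * besovIntegrand p (fun w : ℂ => w) z ∂dA|
        ≤ ε / (2 * (M + 1))
        * ∫ z in unitDisk, besovIntegrand p (fun w : ℂ => w) z ∂dA := by
      rw [abs_sub_comm]
      exact h2
    have hεM0 : 0 ≤ ε / (2 * (M + 1)) := hε'.le
    have b1 : ε / (2 * (M + 1)) * (∫ z in unitDisk, besovIntegrand p φ z ∂dA)
        ≤ ε / (2 * (M + 1)) * M := mul_le_mul_of_nonneg_left hMle hεM0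
    have b2 : ε / (2 * (M + 1)) * (∫ z in unitDisk, besovIntegrand p (fun w : ℂ => w) z ∂dA)
        ≤ ε / (2 * (M + 1)) * M := mul_le_mul_of_nonneg_left hMle' hεM0
    linarith
  have h9 : |(∫ z in unitDisk, g (‖φ z‖ ^ p) * besovIntegrand p φ z ∂dA)
      - ∫ z in unitDisk, g (‖z‖ ^ p) * besovIntegrand p (fun w : ℂ => w) z ∂dA| ≤ 0 := by
    by_contra hcon
    push_neg at hcon
    have := habs (|(∫ z in unitDisk, g (‖φ z‖ ^ p) * besovIntegrand p φ z ∂dA)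
      - ∫ z in unitDisk, g (‖z‖ ^ p) * besovIntegrand p (fun w : ℂ => w) z ∂dA| / 2)
      (by linarith)
    linarith
  have h10 := abs_nonpos_iff.mp h9
  linarith [sub_eq_zero.mp h10]

/-! #### Injectivity near the origin from the a.e.-single-preimage hypothesis -/

lemma det_complex_mul (c : ℂ) :
    ((ContinuousLinearMap.smulRight (1 : ℂ →L[ℂ] ℂ) c).restrictScalars ℝ).det
      = Complex.normSq c := by
  have h : (((ContinuousLinearMap.smulRight (1 : ℂ →L[ℂ] ℂ) c).restrictScalars ℝ)
      : ℂ →ₗ[ℝ] ℂ) = (Algebra.lmul ℝ ℂ) c := by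
    ext z
    simp [mul_comm]
  rw [ContinuousLinearMap.det, h, ← Algebra.norm_apply, Algebra.norm_complex_apply]

lemma injOn_preimage {φ : ℂ → ℂ} (hφ : IsAnalyticSelfMap φ) {r : ℝ} (hr : 0 < r)
    (hae : ∀ᵐ w ∂(volume : Measure ℂ), ‖w‖ < r → ∃! z, z ∈ unitDisk ∧ φ z = w) :
    InjOn φ (unitDisk ∩ φ ⁻¹' (ball (0:ℂ) (min r 1))) := by
  have hr'0 : 0 < min r 1 := lt_min hr one_pos
  have hr'le : min r 1 ≤ r := min_le_left _ _
  have hNnull : volume {w : ℂ | ¬ (‖w‖ < r → ∃! z, z ∈ unitDisk ∧ φ z = w)} = 0 := hae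
  have hA : AnalyticOnNhd ℂ φ unitDisk := hφ.1.analyticOnNhd isOpen_unitDisk
  have hpc : IsPreconnected unitDisk := (convex_ball (0:ℂ) 1).isPreconnected
  rcases hA.is_constant_or_isOpen hpc with ⟨w0, hw0⟩ | hopen
  · -- constant map: contradicts the existence of preimages for a.e. w
    exfalso
    have hsub : ball (0:ℂ) (min r 1) \ {w0}
        ⊆ {w : ℂ | ¬ (‖w‖ < r → ∃! z, z ∈ unitDisk ∧ φ z = w)} := by
      rintro w ⟨hw1, hw2⟩
      intro hcon
      obtain ⟨z, ⟨hz, hφz⟩, -⟩ := hcon (lt_of_lt_of_le (mem_ball_zero_iff.mp hw1) hr'le)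
      exact hw2 (by rw [← hφz, hw0 z hz]; rfl)
    have h1 : volume (ball (0:ℂ) (min r 1) \ {w0}) = 0 :=
      measure_mono_null hsub hNnull
    rw [measure_diff_null (measure_singleton w0)] at h1
    exact (measure_ball_pos volume (0:ℂ) hr'0).ne' h1
  · -- open mapping: two distinct preimages give a positive measure set of
    -- points with two preimages
    intro z₁ hz₁ z₂ hz₂ heq
    by_contra hne
    have hU : IsOpen (unitDisk ∩ φ ⁻¹' (ball (0:ℂ) (min r 1))) :=
      hφ.1.continuousOn.isOpen_inter_preimage isOpen_unitDisk isOpen_ball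
    obtain ⟨ε₁, hε₁, hb₁⟩ := Metric.isOpen_iff.mp hU z₁ hz₁
    obtain ⟨ε₂, hε₂, hb₂⟩ := Metric.isOpen_iff.mp hU z₂ hz₂
    set ε := min (min ε₁ ε₂) (dist z₁ z₂ / 2) with hε
    have hd12 : 0 < dist z₁ z₂ := dist_pos.mpr hne
    have hεpos : 0 < ε := lt_min (lt_min hε₁ hε₂) (by linarith)
    have hB₁ : ball z₁ ε ⊆ unitDisk ∩ φ ⁻¹' (ball (0:ℂ) (min r 1)) :=
      (ball_subset_ball (le_trans (min_le_left _ _) (min_le_left _ _))).trans hb₁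
    have hB₂ : ball z₂ ε ⊆ unitDisk ∩ φ ⁻¹' (ball (0:ℂ) (min r 1)) :=
      (ball_subset_ball (le_trans (min_le_left _ _) (min_le_right _ _))).trans hb₂
    have hdisj : Disjoint (ball z₁ ε) (ball z₂ ε) := by
      apply ball_disjoint_ball
      have : ε ≤ dist z₁ z₂ / 2 := min_le_right _ _
      linarith
    have ho₁ : IsOpen (φ '' ball z₁ ε) :=
      hopen _ (hB₁.trans inter_subset_left) isOpen_ball
    have ho₂ : IsOpen (φ '' ball z₂ ε) :=
      hopen _ (hB₂.trans inter_subset_left) isOpen_ball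
    set V := φ '' ball z₁ ε ∩ φ '' ball z₂ ε ∩ ball (0:ℂ) (min r 1) with hV
    have hVopen : IsOpen V := (ho₁.inter ho₂).inter isOpen_ball
    have hVne : (φ z₁) ∈ V := by
      refine ⟨⟨mem_image_of_mem φ (mem_ball_self hεpos), ?_⟩, ?_⟩
      · rw [heq]; exact mem_image_of_mem φ (mem_ball_self hεpos)
      · exact (hz₁.2 : φ z₁ ∈ ball (0:ℂ) (min r 1))
    have hVsub : V ⊆ {w : ℂ | ¬ (‖w‖ < r → ∃! z, z ∈ unitDisk ∧ φ z = w)} := by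
      rintro w ⟨⟨hw1, hw2⟩, hw3⟩
      intro hcon
      obtain ⟨z, -, huniq⟩ := hcon (lt_of_lt_of_le (mem_ball_zero_iff.mp hw3) hr'le)
      obtain ⟨a, ha, hφa⟩ := hw1
      obtain ⟨b, hb, hφb⟩ := hw2
      have hab : a = b := by
        rw [huniq a ⟨(hB₁ ha).1, hφa⟩, huniq b ⟨(hB₂ hb).1, hφb⟩]
      exact (disjoint_left.mp hdisj ha) (hab ▸ hb)
    have := measure_mono_null hVsub hNnull
    exact (hVopen.measure_pos volume ⟨_, hVne⟩).ne' this

lemma factor_aux {a b gv : ℝ} (ha : 0 ≤ a) (hb : 0 ≤ b) {p : ℝ} (hp : p ≠ 0) :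
    gv * (a ^ p * b ^ (p - 2)) = a ^ (2:ℕ) * (gv * (a * b) ^ (p - 2)) := by
  have h1 : a ^ (p - 2) * a ^ (2:ℝ) = a ^ p := by
    rw [← Real.rpow_add' ha (by simpa using hp)]
    norm_num
  have h2 : a ^ (2:ℝ) = a ^ (2:ℕ) := by
    rw [← Real.rpow_natCast a 2]
    norm_num
  rw [← h1, h2, Real.mul_rpow ha hb]
  ring

/-! #### The key lemma: the isometry forces |φ'(0)| = 1 -/

lemma deriv_norm_one {p : ℝ} (hp : 2 < p) {φ : ℂ → ℂ} (hφ : IsAnalyticSelfMap φ)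
    (h : IsBesovIsometry p φ) (hφ0 : φ 0 = 0) {r : ℝ} (hr : 0 < r)
    (hae : ∀ᵐ w ∂(volume : Measure ℂ), ‖w‖ < r → ∃! z, z ∈ unitDisk ∧ φ z = w) :
    ‖deriv φ 0‖ = 1 := by
  have hp0 : (0:ℝ) < p := by linarith
  have hpne : p ≠ 0 := by linarith
  set r' := min r 1 with hr'def
  have hr'0 : 0 < r' := lt_min hr one_pos
  have hr'1 : r' ≤ 1 := min_le_right _ _
  set q := (r'/2) ^ p with hqdef
  have hq0 : 0 < q := Real.rpow_pos_of_pos (by linarith) p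
  set g : ℝ → ℝ := fun t => max (q - t) 0 with hgdef
  have hgc : Continuous g := (continuous_const.sub continuous_id).max continuous_const
  have hg0 : ∀ t, 0 ≤ g t := fun t => le_max_right _ _
  have hgzero : ∀ t : ℝ, q ≤ t → g t = 0 := fun t ht => max_eq_right (by linarith)
  have hgpos : ∀ t : ℝ, t < q → 0 < g t := fun t ht => lt_max_iff.mpr (Or.inl (by linarith))
  -- the set U on which φ is injective
  set U := unitDisk ∩ φ ⁻¹' (ball (0:ℂ) r') with hUdef
  have hUopen : IsOpen U :=
    hφ.1.continuousOn.isOpen_inter_preimage isOpen_unitDisk isOpen_ball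
  have hUmeas : MeasurableSet U := hUopen.measurableSet
  have hUsub : U ⊆ unitDisk := inter_subset_left
  have hinj : InjOn φ U := injOn_preimage hφ hr hae
  have h0U : (0:ℂ) ∈ U := by
    refine ⟨zero_mem_unitDisk, ?_⟩
    simp only [mem_preimage, hφ0, mem_ball_zero_iff, norm_zero]
    exact hr'0
  -- continuity facts
  have hWc : ContinuousOn (besovIntegrand p φ) unitDisk :=
    contOn_besovIntegrand hp0.le hφ.1
  have hW0 : ∀ z ∈ unitDisk, 0 ≤ besovIntegrand p φ z := fun z hz => besovIntegrand_nonneg hz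
  have hWi : IntegrableOn (besovIntegrand p φ) unitDisk dA := by
    have := (h (fun z => z) (memBesov_id hp)).1.2
    rwa [show ((fun z : ℂ => z) ∘ φ) = φ from rfl] at this
  have huφ : ContinuousOn (fun z => ‖φ z‖ ^ p) unitDisk :=
    (hφ.1.continuousOn.norm).rpow_const (fun z _ => Or.inr hp0.le)
  have huφ01 : ∀ z ∈ unitDisk, ‖φ z‖ ^ p ∈ Icc (0:ℝ) 1 := fun z hz =>
    ⟨Real.rpow_nonneg (norm_nonneg _) _,
      Real.rpow_le_one (norm_nonneg _) (mem_unitDisk.mp (hφ.2 hz)).le hp0.le⟩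
  -- the identity for g, over dA
  have hid := g_identity hp hφ h hφ0 hgc
  -- rewrite the RHS using besovIntegrand_id and pass to volume
  have hid2 : ∫ z in unitDisk, g (‖φ z‖ ^ p) * besovIntegrand p φ z ∂dA
      = ∫ z in unitDisk, g (‖z‖ ^ p) * (1 - ‖z‖ ^ 2) ^ (p - 2) ∂dA := by
    rw [hid]
    apply setIntegral_congr_fun measurableSet_unitDisk
    intro z hz
    simp only [besovIntegrand_id]
  have hidvol : ∫ z in unitDisk, g (‖φ z‖ ^ p) * besovIntegrand p φ z ∂volume
      = ∫ z in unitDisk, g (‖z‖ ^ p) * (1 - ‖z‖ ^ 2) ^ (p - 2) ∂volume := by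
    have := hid2
    rw [setIntegral_dA, setIntegral_dA] at this
    exact smul_right_injective ℝ kappa_pos.ne' this
  -- integrability over volume
  have hWcV : ContinuousOn (fun z : ℂ => (1 - ‖z‖ ^ 2) ^ (p - 2)) unitDisk :=
    ((continuous_const.sub ((continuous_norm).pow 2)).continuousOn).rpow_const
      (fun z hz => Or.inl (weight_base_pos hz).ne')
  have hV0 : ∀ z ∈ unitDisk, 0 ≤ (1 - ‖z‖ ^ 2) ^ (p - 2) := fun z hz => (weight_pos hz).le
  have hVi : IntegrableOn (fun z : ℂ => (1 - ‖z‖ ^ 2) ^ (p - 2)) unitDisk dA := by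
    have := (memBesov_id (p := p) hp).2
    apply this.congr_fun _ measurableSet_unitDisk
    intro z hz
    rw [besovIntegrand_id]
  have huid : ContinuousOn (fun z : ℂ => ‖z‖ ^ p) unitDisk :=
    (continuous_norm.continuousOn).rpow_const (fun z _ => Or.inr hp0.le)
  have huid01 : ∀ z ∈ unitDisk, ‖z‖ ^ p ∈ Icc (0:ℝ) 1 := fun z hz =>
    ⟨Real.rpow_nonneg (norm_nonneg _) _,
      Real.rpow_le_one (norm_nonneg _) (mem_unitDisk.mp hz).le hp0.le⟩
  have hLi : IntegrableOn (fun z => g (‖φ z‖ ^ p) * besovIntegrand p φ z) unitDisk volume :=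
    integrableOn_dA_iff.mp (integrableOn_comp_mul huφ huφ01 hWc hW0 hWi hgc)
  have hRi : IntegrableOn (fun z => g (‖z‖ ^ p) * (1 - ‖z‖ ^ 2) ^ (p - 2)) unitDisk volume :=
    integrableOn_dA_iff.mp (integrableOn_comp_mul huid huid01 hWcV hV0 hVi hgc)
  -- pass to lintegrals
  set F1 : ℂ → ENNReal := fun z => ENNReal.ofReal (g (‖φ z‖ ^ p) * besovIntegrand p φ z)
    with hF1def
  set G : ℂ → ENNReal := fun w => ENNReal.ofReal (g (‖w‖ ^ p) * (1 - ‖w‖ ^ 2) ^ (p - 2))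
    with hGdef
  have hlinL : ENNReal.ofReal (∫ z in unitDisk, g (‖φ z‖ ^ p) * besovIntegrand p φ z ∂volume)
      = ∫⁻ z in unitDisk, F1 z ∂volume := by
    apply ofReal_integral_eq_lintegral_ofReal hLi
    exact (ae_restrict_iff' measurableSet_unitDisk).mpr (ae_of_all _ fun z hz =>
      mul_nonneg (hg0 _) (hW0 z hz))
  have hlinR : ENNReal.ofReal (∫ z in unitDisk, g (‖z‖ ^ p) * (1 - ‖z‖ ^ 2) ^ (p - 2) ∂volume)
      = ∫⁻ z in unitDisk, G z ∂volume := by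
    apply ofReal_integral_eq_lintegral_ofReal hRi
    exact (ae_restrict_iff' measurableSet_unitDisk).mpr (ae_of_all _ fun z hz =>
      mul_nonneg (hg0 _) (hV0 z hz))
  have hlin : ∫⁻ z in unitDisk, F1 z ∂volume = ∫⁻ z in unitDisk, G z ∂volume := by
    rw [← hlinL, ← hlinR, hidvol]
  have hGfin : ∫⁻ z in unitDisk, G z ∂volume ≠ ⊤ := by
    rw [← hlinR]; exact ENNReal.ofReal_ne_top
  -- F1 vanishes off U
  have hvanish : ∀ z ∈ unitDisk \ U, F1 z = 0 := by
    rintro z ⟨hz, hzU⟩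
    have hout : r' ≤ ‖φ z‖ := by
      by_contra hco
      push_neg at hco
      exact hzU ⟨hz, by simpa [mem_preimage, mem_ball_zero_iff] using hco⟩
    have : q ≤ ‖φ z‖ ^ p := by
      rw [hqdef]
      apply Real.rpow_le_rpow (by linarith) (by linarith) hp0.le
    rw [hF1def]
    simp only [hgzero _ this, zero_mul, ENNReal.ofReal_zero]
  have hsplit : ∫⁻ z in unitDisk, F1 z ∂volume = ∫⁻ z in U, F1 z ∂volume := by
    have hcup : U ∪ (unitDisk \ U) = unitDisk := union_diff_cancel hUsub
    rw [← hcup, lintegral_union (measurableSet_unitDisk.diff hUmeas) disjoint_sdiff_right]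
    have hz : ∫⁻ z in unitDisk \ U, F1 z ∂volume = 0 := by
      rw [setLIntegral_congr_fun (measurableSet_unitDisk.diff hUmeas)
        (fun z hz => hvanish z hz)]
      simp
    rw [hz, add_zero]
  -- pointwise factorization and Schwarz-Pick bound on U
  set H : ℂ → ENNReal := fun z => ENNReal.ofReal (‖deriv φ z‖ ^ (2:ℕ)) * G (φ z) with hHdef
  have hfact : ∀ z ∈ U, F1 z = ENNReal.ofReal (‖deriv φ z‖ ^ (2:ℕ))
      * ENNReal.ofReal (g (‖φ z‖ ^ p) * (‖deriv φ z‖ * (1 - ‖z‖ ^ 2)) ^ (p - 2)) := by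
    intro z hz
    rw [hF1def]
    show ENNReal.ofReal (g (‖φ z‖ ^ p) * (‖deriv φ z‖ ^ p * (1 - ‖z‖ ^ 2) ^ (p - 2))) = _
    rw [factor_aux (norm_nonneg _) (weight_base_pos (hUsub hz)).le hpne,
      ENNReal.ofReal_mul (by positivity)]
  have hSPle : ∀ z ∈ U,
      ENNReal.ofReal (g (‖φ z‖ ^ p) * (‖deriv φ z‖ * (1 - ‖z‖ ^ 2)) ^ (p - 2)) ≤ G (φ z) := by
    intro z hz
    have hSP : ‖deriv φ z‖ * (1 - ‖z‖ ^ 2) ≤ 1 - ‖φ z‖ ^ 2 :=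
      schwarzPick hφ.1 hφ.2 (hUsub hz)
    have hrp : (‖deriv φ z‖ * (1 - ‖z‖ ^ 2)) ^ (p - 2) ≤ (1 - ‖φ z‖ ^ 2) ^ (p - 2) :=
      Real.rpow_le_rpow (mul_nonneg (norm_nonneg _) (weight_base_pos (hUsub hz)).le) hSP (by linarith)
    exact ENNReal.ofReal_le_ofReal (mul_le_mul_of_nonneg_left hrp (hg0 _))
  have hF1leH : ∀ z ∈ U, F1 z ≤ H z := by
    intro z hz
    rw [hfact z hz, hHdef]
    exact mul_le_mul_right (hSPle z hz) _
  -- change of variables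
  have hfderiv : ∀ z ∈ U, HasFDerivWithinAt φ
      ((ContinuousLinearMap.smulRight (1 : ℂ →L[ℂ] ℂ) (deriv φ z)).restrictScalars ℝ) U z := by
    intro z hz
    have hda : HasDerivAt φ (deriv φ z) z :=
      (hφ.1.differentiableAt (isOpen_unitDisk.mem_nhds (hUsub hz))).hasDerivAt
    exact (hda.hasFDerivAt.restrictScalars ℝ).hasFDerivWithinAt
  have hcov := lintegral_image_eq_lintegral_abs_det_fderiv_mul volume hUmeas hfderiv hinj G
  have hdetrw : ∀ z ∈ U, ENNReal.ofReal
        |((ContinuousLinearMap.smulRight (1 : ℂ →L[ℂ] ℂ) (deriv φ z)).restrictScalars ℝ).det|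
        * G (φ z) = H z := by
    intro z hz
    rw [det_complex_mul, _root_.abs_of_nonneg (normSq_nonneg _), hHdef]
    congr 2
    rw [← Complex.sq_norm]
  have hcov2 : ∫⁻ w in φ '' U, G w ∂volume = ∫⁻ z in U, H z ∂volume := by
    rw [hcov]
    exact setLIntegral_congr_fun hUmeas (fun z hz => hdetrw z hz)
  -- the squeeze
  have himgsub : φ '' U ⊆ unitDisk := by
    rintro w ⟨z, hz, rfl⟩
    have : ‖φ z‖ < r' := by simpa [mem_preimage, mem_ball_zero_iff] using hz.2
    exact mem_unitDisk.mpr (lt_of_lt_of_le this hr'1)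
  have hstep1 : ∫⁻ z in U, F1 z ∂volume ≤ ∫⁻ z in U, H z ∂volume := by
    apply lintegral_mono_ae
    exact (ae_restrict_iff' hUmeas).mpr (ae_of_all _ hF1leH)
  have hstep2 : ∫⁻ z in U, H z ∂volume ≤ ∫⁻ z in unitDisk, G z ∂volume := by
    rw [← hcov2]
    exact lintegral_mono_set himgsub
  have hUeq : ∫⁻ z in U, F1 z ∂volume = ∫⁻ z in U, H z ∂volume := by
    have e1 : ∫⁻ z in U, F1 z ∂volume = ∫⁻ z in unitDisk, G z ∂volume := by
      rw [← hsplit, hlin]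
    apply le_antisymm hstep1
    rw [e1]
    exact hstep2
  have hF1fin : ∫⁻ z in U, F1 z ∂volume ≠ ⊤ := by
    rw [← hsplit, hlin]
    exact hGfin
  -- measurability
  have haemF1 : AEMeasurable F1 (volume.restrict U) := by
    apply ENNReal.measurable_ofReal.comp_aemeasurable
    exact (((hgc.comp_continuousOn (huφ.mono hUsub)).mul (hWc.mono hUsub)).aemeasurable hUmeas)
  have hφU : MapsTo φ U unitDisk := fun z hz => himgsub (mem_image_of_mem φ hz)
  have haemH : AEMeasurable H (volume.restrict U) := by
    have hc1 : ContinuousOn (fun z => ‖deriv φ z‖ ^ (2:ℕ)) U :=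
      ((((hφ.1.analyticOnNhd isOpen_unitDisk).deriv).continuousOn.mono hUsub).norm).pow 2
    have hbase : ContinuousOn (fun z : ℂ => 1 - ‖φ z‖ ^ 2) U :=
      continuous_const.continuousOn.sub
        (((hφ.1.continuousOn.mono hUsub).norm).pow 2)
    have hc2 : ContinuousOn (fun z : ℂ => (1 - ‖φ z‖ ^ 2) ^ (p - 2)) U :=
      hbase.rpow_const (fun z hz => Or.inl (weight_base_pos (hφU hz)).ne')
    have hc3 : ContinuousOn (fun z => g (‖φ z‖ ^ p)) U :=
      hgc.comp_continuousOn ((huφ.mono hUsub))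
    have : ContinuousOn (fun z => ‖deriv φ z‖ ^ (2:ℕ) * (g (‖φ z‖ ^ p)
        * (1 - ‖φ z‖ ^ 2) ^ (p - 2))) U := hc1.mul (hc3.mul hc2)
    have haux : AEMeasurable (fun z => ‖deriv φ z‖ ^ (2:ℕ) * (g (‖φ z‖ ^ p)
        * (1 - ‖φ z‖ ^ 2) ^ (p - 2))) (volume.restrict U) := this.aemeasurable hUmeas
    have heqH : ∀ z, H z = ENNReal.ofReal (‖deriv φ z‖ ^ (2:ℕ) * (g (‖φ z‖ ^ p)
        * (1 - ‖φ z‖ ^ 2) ^ (p - 2))) := by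
      intro z
      rw [hHdef, hGdef]
      show _ = ENNReal.ofReal (‖deriv φ z‖ ^ (2:ℕ) * (g (‖φ z‖ ^ p)
        * (1 - ‖φ z‖ ^ 2) ^ (p - 2)))
      rw [ENNReal.ofReal_mul (by positivity)]
    exact (ENNReal.measurable_ofReal.comp_aemeasurable haux).congr
      (ae_of_all _ fun z => (heqH z).symm)
  -- a.e. equality on U
  have haeeq : ∀ᵐ z ∂(volume.restrict U), F1 z = H z := by
    have hleae : F1 ≤ᵐ[volume.restrict U] H :=
      (ae_restrict_iff' hUmeas).mpr (ae_of_all _ hF1leH)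
    have hsub2 : ∫⁻ z in U, (H z - F1 z) ∂volume = 0 := by
      rw [lintegral_sub' haemF1 hF1fin hleae, hUeq, tsub_self]
    have := (lintegral_eq_zero_iff' (haemH.sub haemF1)).mp hsub2
    filter_upwards [this, hleae] with z h1 h2
    have h3 : H z ≤ F1 z := tsub_eq_zero_iff_le.mp h1
    exact le_antisymm h2 h3
  -- conclusion
  have hSch1 : ‖deriv φ 0‖ ≤ 1 := by
    have hm : MapsTo φ (ball (0:ℂ) 1) (ball (φ 0) 1) := by
      rw [hφ0]; exact hφ.2
    have := Complex.norm_deriv_le_div_of_mapsTo_ball hφ.1 (hm.mono_right ball_subset_closedBall) one_pos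
    simpa using this
  by_contra hne1
  have hlt1 : ‖deriv φ 0‖ < 1 := lt_of_le_of_ne hSch1 hne1
  -- the defect function
  set d : ℂ → ℝ := fun z => (1 - ‖φ z‖ ^ 2) - ‖deriv φ z‖ * (1 - ‖z‖ ^ 2) with hddef
  have hdc : ContinuousOn d unitDisk := by
    apply ContinuousOn.sub
    · exact continuous_const.continuousOn.sub ((hφ.1.continuousOn.norm).pow 2)
    · exact (((hφ.1.analyticOnNhd isOpen_unitDisk).deriv).continuousOn.norm).mul
        (continuous_const.continuousOn.sub (continuous_norm.continuousOn.pow 2))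
  have hd0 : 0 < d 0 := by
    have he : d 0 = 1 - ‖deriv φ 0‖ := by
      rw [hddef]
      simp [hφ0]
    rw [he]
    linarith
  set U2 := U ∩ φ ⁻¹' (ball (0:ℂ) (r'/2)) with hU2def
  have hU2open : IsOpen U2 :=
    (hφ.1.continuousOn.mono hUsub).isOpen_inter_preimage hUopen isOpen_ball
  have h0U2 : (0:ℂ) ∈ U2 := by
    refine ⟨h0U, ?_⟩
    simp only [mem_preimage, hφ0, mem_ball_zero_iff, norm_zero]
    linarith
  set O := U2 ∩ d ⁻¹' (Ioi 0) with hOdef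
  have hOopen : IsOpen O :=
    ((hdc.mono (hU2def ▸ (inter_subset_left.trans hUsub))).isOpen_inter_preimage
      hU2open isOpen_Ioi)
  have h0O : (0:ℂ) ∈ O := ⟨h0U2, by simpa [mem_preimage] using hd0⟩
  have hOsubU : O ⊆ U := fun z hz => hz.1.1
  have hOsubD : O ⊆ unitDisk := hOsubU.trans hUsub
  -- on O, a.e. equality forces deriv φ = 0
  have hkey : ∀ z ∈ O, F1 z = H z → deriv φ z = 0 := by
    intro z hzO hFH
    by_contra hd0'
    have hzU : z ∈ U := hOsubU hzO
    have hnormpos : 0 < ‖deriv φ z‖ ^ (2:ℕ) := pow_pos (norm_pos_iff.mpr hd0') 2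
    rw [hfact z hzU, hHdef] at hFH
    have hcancel := (ENNReal.mul_right_inj
      (by simpa using (ENNReal.ofReal_pos.mpr hnormpos).ne')
      ENNReal.ofReal_ne_top).mp hFH
    rw [hGdef] at hcancel
    have hgvpos : 0 < g (‖φ z‖ ^ p) := by
      apply hgpos
      rw [hqdef]
      have : ‖φ z‖ < r'/2 := by
        have := hzO.1.2
        simpa [mem_preimage, mem_ball_zero_iff] using this
      exact Real.rpow_lt_rpow (norm_nonneg _) this hp0
    have hreal : g (‖φ z‖ ^ p) * (‖deriv φ z‖ * (1 - ‖z‖ ^ 2)) ^ (p - 2)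
        = g (‖φ z‖ ^ p) * (1 - ‖φ z‖ ^ 2) ^ (p - 2) := by
      apply ENNReal.ofReal_eq_ofReal_iff ?_ ?_ |>.mp hcancel
      · exact mul_nonneg (hg0 _) (Real.rpow_nonneg
          (mul_nonneg (norm_nonneg _) (weight_base_pos (hUsub hzU)).le) _)
      · exact mul_nonneg (hg0 _) (Real.rpow_nonneg (weight_base_pos (hφU hzU)).le _)
    have hX := mul_left_cancel₀ hgvpos.ne' hreal
    have hXX : ‖deriv φ z‖ * (1 - ‖z‖ ^ 2) = 1 - ‖φ z‖ ^ 2 := by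
      have hb1 : (0:ℝ) ≤ ‖deriv φ z‖ * (1 - ‖z‖ ^ 2) := by
        have := weight_base_pos (hUsub hzU)
        positivity
      have hb2 : (0:ℝ) ≤ 1 - ‖φ z‖ ^ 2 := (weight_base_pos (hφU hzU)).le
      have hpm2 : p - 2 ≠ 0 := by linarith
      have := congrArg (fun x : ℝ => x ^ (p - 2)⁻¹) hX
      simpa only [Real.rpow_rpow_inv hb1 hpm2, Real.rpow_rpow_inv hb2 hpm2] using this
    have : d z = 0 := by rw [hddef]; simp only []; linarith
    have hdz : 0 < d z := by simpa [mem_preimage] using hzO.2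
    linarith
  -- deriv φ vanishes identically on O
  have haeO : ∀ᵐ z ∂(volume.restrict O), deriv φ z = 0 := by
    have h1 := ae_restrict_of_ae_restrict_of_subset hOsubU haeeq
    filter_upwards [h1, ae_restrict_mem hOopen.measurableSet] with z hz1 hz2
    exact hkey z hz2 hz1
  have hzero : ∀ z ∈ O, deriv φ z = 0 := by
    by_contra hcon
    push_neg at hcon
    obtain ⟨z₁, hz₁O, hz₁⟩ := hcon
    set N := O ∩ (deriv φ) ⁻¹' ({0}ᶜ) with hNdef
    have hNopen : IsOpen N :=
      (((hφ.1.analyticOnNhd isOpen_unitDisk).deriv).continuousOn.mono hOsubD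
        ).isOpen_inter_preimage hOopen isOpen_compl_singleton
    have hNne : z₁ ∈ N := ⟨hz₁O, by simpa using hz₁⟩
    have hNpos : 0 < volume N := hNopen.measure_pos volume ⟨z₁, hNne⟩
    have hNnull : volume N = 0 := by
      have h2 : (volume.restrict O) {z | ¬ deriv φ z = 0} = 0 := by
        rw [← ae_iff] ; exact haeO
      have h3 : (volume.restrict O) N ≤ (volume.restrict O) {z | ¬ deriv φ z = 0} := by
        apply measure_mono
        rintro z ⟨_, hz2⟩
        simpa using hz2
      have h4 : (volume.restrict O) N = volume N := by
        rw [Measure.restrict_apply hNopen.measurableSet]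
        congr 1
        exact inter_eq_left.mpr (fun z hz => hz.1)
      rw [h4] at h3
      rw [h2] at h3
      exact le_antisymm h3 bot_le
    exact hNpos.ne' hNnull
  -- φ is constant near 0, contradicting injectivity
  obtain ⟨ρ, hρ0, hρsub⟩ := Metric.isOpen_iff.mp hOopen 0 h0O
  have hconst : ∀ z ∈ ball (0:ℂ) ρ, φ z = φ 0 := by
    intro z hz
    have hdiff : DifferentiableOn ℂ φ (ball (0:ℂ) ρ) :=
      hφ.1.mono (hρsub.trans hOsubD)
    have hf' : ∀ x ∈ ball (0:ℂ) ρ, fderivWithin ℂ φ (ball (0:ℂ) ρ) x = 0 := by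
      intro x hx
      rw [fderivWithin_of_isOpen isOpen_ball hx]
      have hda : HasDerivAt φ (deriv φ x) x :=
        (hφ.1.differentiableAt (isOpen_unitDisk.mem_nhds (hOsubD (hρsub hx)))).hasDerivAt
      rw [hzero x (hρsub hx)] at hda
      have hfd : HasFDerivAt φ (0 : ℂ →L[ℂ] ℂ) x := by
        have h5 := hda.hasFDerivAt
        rw [ContinuousLinearMap.toSpanSingleton_zero] at h5
        exact h5
      rw [hfd.fderiv]
    exact (convex_ball (0:ℂ) ρ).is_const_of_fderivWithin_eq_zero hdiff hf' hz
      (mem_ball_self hρ0)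
  have hz₁mem : ((ρ/2 : ℝ) : ℂ) ∈ ball (0:ℂ) ρ := by
    rw [mem_ball_zero_iff, Complex.norm_real, Real.norm_eq_abs, abs_of_pos (by linarith)]
    linarith
  have heqφ : φ ((ρ/2 : ℝ) : ℂ) = φ 0 := hconst _ hz₁mem
  have := hinj (hOsubU (hρsub hz₁mem)) (hOsubU (hρsub (mem_ball_self hρ0))) heqφ
  have hne : ((ρ/2 : ℝ) : ℂ) ≠ 0 := by
    simp only [ne_eq, Complex.ofReal_eq_zero]
    linarith
  exact hne this

/-! #### The two directions -/

lemma rotation_of_isometry {p : ℝ} (hp : 2 < p) {φ : ℂ → ℂ} (hφ : IsAnalyticSelfMap φ)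
    (hpre : ∃ r > (0:ℝ), ∀ᵐ w ∂(volume : Measure ℂ), ‖w‖ < r → ∃! z, z ∈ unitDisk ∧ φ z = w)
    (h : IsBesovIsometry p φ) : IsRotation φ := by
  obtain ⟨r, hr, hae⟩ := hpre
  have hφ0 : φ 0 = 0 := phi_zero hp h
  have hd1 : ‖deriv φ 0‖ = 1 := deriv_norm_one hp hφ h hφ0 hr hae
  have hm : MapsTo φ (ball (0:ℂ) 1) (ball (φ 0) 1) := by rw [hφ0]; exact hφ.2
  have heq := Complex.affine_of_mapsTo_ball_of_exists_norm_dslope_eq_div hφ.1 (hm.mono_right ball_subset_closedBall)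
    (mem_ball_self one_pos) (by rw [dslope_same, div_one]; exact hd1)
  refine ⟨deriv φ 0, hd1, ?_⟩
  intro z hz
  have h2 := heq hz
  simpa [hφ0, dslope_same, smul_eq_mul, mul_comm] using h2

lemma isometry_of_rotation {p : ℝ} (hp : 2 < p) {φ : ℂ → ℂ}
    (hrot : IsRotation φ) : IsBesovIsometry p φ := by
  obtain ⟨lam, hlam, hφeq⟩ := hrot
  set c : Circle := ⟨lam, by show lam ∈ sphere (0:ℂ) 1; rwa [mem_sphere_zero_iff_norm]⟩
    with hc
  set e : ℂ ≃ₗᵢ[ℝ] ℂ := rotation c with he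
  have heap : ∀ z, e z = lam * z := fun z => by rw [he, rotation_apply]
  have hmp : MeasurePreserving e volume volume := e.measurePreserving
  have hemb : MeasurableEmbedding e := e.toHomeomorph.measurableEmbedding
  have hepre : e ⁻¹' unitDisk = unitDisk := by
    ext z
    simp only [mem_preimage, mem_unitDisk, heap, norm_mul, hlam, one_mul]
  have hmaps : ∀ z ∈ unitDisk, lam * z ∈ unitDisk := by
    intro z hz
    rw [mem_unitDisk, norm_mul, hlam, one_mul]
    exact mem_unitDisk.mp hz
  have hφ0 : φ 0 = 0 := by rw [hφeq 0 zero_mem_unitDisk, mul_zero]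
  intro f hf
  have hev : ∀ z ∈ unitDisk, f ∘ φ =ᶠ[nhds z] fun w => f (lam * w) := by
    intro z hz
    filter_upwards [isOpen_unitDisk.mem_nhds hz] with w hw
    simp [Function.comp, hφeq w hw]
  have hcomp : ∀ z ∈ unitDisk, HasDerivAt (fun w : ℂ => f (lam * w))
      (deriv f (lam * z) * lam) z := by
    intro z hz
    have hlin : HasDerivAt (fun w : ℂ => lam * w) lam z := by
      simpa using (hasDerivAt_id z).const_mul lam
    have hfz : HasDerivAt f (deriv f (lam * z)) (lam * z) :=
      (hf.1.differentiableAt (isOpen_unitDisk.mem_nhds (hmaps z hz))).hasDerivAt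
    exact hfz.comp z hlin
  have hdiff : DifferentiableOn ℂ (f ∘ φ) unitDisk := by
    intro z hz
    exact (((hcomp z hz).differentiableAt).congr_of_eventuallyEq
      (hev z hz)).differentiableWithinAt
  have hderiv : ∀ z ∈ unitDisk, deriv (f ∘ φ) z = deriv f (lam * z) * lam := by
    intro z hz
    rw [(hev z hz).deriv_eq]
    exact (hcomp z hz).deriv
  have hieq : EqOn (besovIntegrand p (f ∘ φ)) ((besovIntegrand p f) ∘ e) unitDisk := by
    intro z hz
    show besovIntegrand p (f ∘ φ) z = besovIntegrand p f (e z)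
    unfold besovIntegrand
    rw [hderiv z hz, heap, norm_mul, hlam, mul_one, norm_mul, hlam, one_mul]
  have hvolint : IntegrableOn ((besovIntegrand p f) ∘ e) unitDisk volume := by
    have h1 : IntegrableOn (besovIntegrand p f) unitDisk volume :=
      integrableOn_dA_iff.mp hf.2
    have h2 := ((hmp.restrict_preimage_emb hemb unitDisk).integrable_comp_emb hemb).mpr h1
    rwa [hepre] at h2
  have hint : IntegrableOn (besovIntegrand p (f ∘ φ)) unitDisk dA := by
    rw [integrableOn_dA_iff]
    exact hvolint.congr_fun hieq.symm measurableSet_unitDisk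
  have hsemi : besovSemi p (f ∘ φ) = besovSemi p f := by
    unfold besovSemi
    congr 1
    rw [setIntegral_congr_fun measurableSet_unitDisk hieq, setIntegral_dA, setIntegral_dA]
    congr 1
    have h3 := hmp.setIntegral_preimage_emb hemb (besovIntegrand p f) unitDisk
    rw [hepre] at h3
    exact h3
  refine ⟨⟨hdiff, hint⟩, ?_⟩
  unfold besovNorm
  rw [hsemi]
  congr 2
  show f (φ 0) = f 0
  rw [hφ0]

/-- For p>2, if almost every point in some neighborhood of the
origin has exactly one preimage under φ, then C_φ is an isometry on B_p if and
only if φ is a rotation of the disk. -/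
theorem isometry_iff_rotation_of_ae_single_preimage
    (p : ℝ) (hp : 2 < p) (φ : ℂ → ℂ)
    (hφ : IsAnalyticSelfMap φ)
    (hpre : ∃ r > (0 : ℝ), ∀ᵐ w ∂(volume : Measure ℂ),
      ‖w‖ < r → ∃! z, z ∈ unitDisk ∧ φ z = w) :
    IsBesovIsometry p φ ↔ IsRotation φ := by
  constructor
  · intro h
    exact rotation_of_isometry hp hφ hpre h
  · intro h
    exact isometry_of_rotation hp h
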